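/- arXiv:2107.05259 — 2 statements merged into one kernel-verified Lean document; each statement's English description precedes it below -/
import Mathlib

section
/- The set of real solutions (x_1,...,x_12, r) to the cube's magic labelling system {x1+x2+x9=r, x1+x3+x10=r, x2+x4+x12=r, x3+x4+x11=r, x5+x6+x9=r, x5+x7+x10=r, x6+x8+x12=r, x7+x8+x11=r} is a linear subspace of R^13 of dimension 6. -/
/-- The set of real solutions (x₁,…,x₁₂,r) ∈ ℝ¹³ of the cube's magic labelling
linear system. Coordinates 0–11 are the edge labels and coordinate 12 is r. -/
def cubeSolutions : Set (Fin 13 → ℝ) :=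
  {v | v 0 + v 1 + v 8 = v 12 ∧ v 0 + v 2 + v 9 = v 12 ∧
       v 1 + v 3 + v 11 = v 12 ∧ v 2 + v 3 + v 10 = v 12 ∧
       v 4 + v 5 + v 8 = v 12 ∧ v 4 + v 6 + v 9 = v 12 ∧
       v 5 + v 7 + v 11 = v 12 ∧ v 6 + v 7 + v 10 = v 12}

noncomputable def pr (i : Fin 6) : (Fin 6 → ℝ) →ₗ[ℝ] ℝ := LinearMap.proj i

noncomputable def cubeParam : (Fin 6 → ℝ) →ₗ[ℝ] (Fin 13 → ℝ) :=
  LinearMap.pi ![pr 0 + pr 1 - pr 4, pr 2 + pr 4 - pr 0,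
    pr 3 + pr 4 - pr 0, pr 0, pr 1, pr 2, pr 3, pr 4,
    pr 5 - pr 1 - pr 2, pr 5 - pr 1 - pr 3,
    pr 5 - pr 3 - pr 4, pr 5 - pr 2 - pr 4, pr 5]

lemma cp0 (p : Fin 6 → ℝ) : cubeParam p 0 = p 0 + p 1 - p 4 := rfl
lemma cp1 (p : Fin 6 → ℝ) : cubeParam p 1 = p 2 + p 4 - p 0 := rfl
lemma cp2 (p : Fin 6 → ℝ) : cubeParam p 2 = p 3 + p 4 - p 0 := rfl
lemma cp3 (p : Fin 6 → ℝ) : cubeParam p 3 = p 0 := rfl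
lemma cp4 (p : Fin 6 → ℝ) : cubeParam p 4 = p 1 := rfl
lemma cp5 (p : Fin 6 → ℝ) : cubeParam p 5 = p 2 := rfl
lemma cp6 (p : Fin 6 → ℝ) : cubeParam p 6 = p 3 := rfl
lemma cp7 (p : Fin 6 → ℝ) : cubeParam p 7 = p 4 := rfl
lemma cp8 (p : Fin 6 → ℝ) : cubeParam p 8 = p 5 - p 1 - p 2 := rfl
lemma cp9 (p : Fin 6 → ℝ) : cubeParam p 9 = p 5 - p 1 - p 3 := rfl
lemma cp10 (p : Fin 6 → ℝ) : cubeParam p 10 = p 5 - p 3 - p 4 := rfl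
lemma cp11 (p : Fin 6 → ℝ) : cubeParam p 11 = p 5 - p 2 - p 4 := rfl
lemma cp12 (p : Fin 6 → ℝ) : cubeParam p 12 = p 5 := rfl

theorem cubeSolutions_is_subspace_dim_six :
    ∃ W : Submodule ℝ (Fin 13 → ℝ), (W : Set (Fin 13 → ℝ)) = cubeSolutions ∧
      Module.finrank ℝ W = 6 := by
  refine ⟨LinearMap.range cubeParam, ?_, ?_⟩
  · ext v
    simp only [SetLike.mem_coe, LinearMap.mem_range, cubeSolutions, Set.mem_setOf_eq]
    constructor
    · rintro ⟨p, rfl⟩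
      simp only [cp0, cp1, cp2, cp3, cp4, cp5, cp6, cp7, cp8, cp9, cp10, cp11, cp12]
      refine ⟨by ring, by ring, by ring, by ring, by ring, by ring, by ring, by ring⟩
    · rintro ⟨h1, h2, h3, h4, h5, h6, h7, h8⟩
      refine ⟨![v 3, v 4, v 5, v 6, v 7, v 12], ?_⟩
      funext i
      fin_cases i
      · show v 3 + v 4 - v 7 = v 0; linarith
      · show v 5 + v 7 - v 3 = v 1; linarith
      · show v 6 + v 7 - v 3 = v 2; linarith
      · rfl
      · rfl
      · rfl
      · rfl
      · rfl
      · show v 12 - v 4 - v 5 = v 8; linarith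
      · show v 12 - v 4 - v 6 = v 9; linarith
      · show v 12 - v 6 - v 7 = v 10; linarith
      · show v 12 - v 5 - v 7 = v 11; linarith
      · rfl
  · have hinj : Function.Injective cubeParam := by
      intro p q h
      funext i
      have h3 := congrFun h 3
      have h4 := congrFun h 4
      have h5 := congrFun h 5
      have h6 := congrFun h 6
      have h7 := congrFun h 7
      have h12 := congrFun h 12
      rw [cp3, cp3] at h3
      rw [cp4, cp4] at h4
      rw [cp5, cp5] at h5
      rw [cp6, cp6] at h6
      rw [cp7, cp7] at h7
      rw [cp12, cp12] at h12
      fin_cases i <;> assumption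
    rw [LinearMap.finrank_range_of_inj hinj]
    simp
end

section
/- Let α = q1α1 + ... + q6α6 with q_i ∈ R. Then α ∈ N^12 if and only if all of the following are nonnegative integers: q1, q2, q3, q6; q1+q4, q2+q4, q3+q4, q6+q4; q1+q3+q5, q1+q5+q6, q2+q3+q5, q2+q5+q6. -/
def a1 : Fin 12 → ℝ := ![0,1,1,0,1,0,0,1,0,0,0,0]
def a2 : Fin 12 → ℝ := ![1,0,0,1,0,1,1,0,0,0,0,0]
def a3 : Fin 12 → ℝ := ![1,0,0,0,1,0,0,0,0,0,1,1]
def a4 : Fin 12 → ℝ := ![0,1,0,0,0,1,0,0,0,1,1,0]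
def a5 : Fin 12 → ℝ := ![1,0,0,1,1,0,0,1,0,0,0,0]
def a6 : Fin 12 → ℝ := ![0,0,0,1,0,0,0,1,1,1,0,0]

/-- `x` is a nonnegative integer. -/
def IsNatNum (x : ℝ) : Prop := ∃ n : ℕ, x = (n : ℝ)

private lemma cv5 (a b c d e f g h i j k l : ℝ) : ![a,b,c,d,e,f,g,h,i,j,k,l] 5 = f := rfl
private lemma cv6 (a b c d e f g h i j k l : ℝ) : ![a,b,c,d,e,f,g,h,i,j,k,l] 6 = g := rfl
private lemma cv7 (a b c d e f g h i j k l : ℝ) : ![a,b,c,d,e,f,g,h,i,j,k,l] 7 = h := rfl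
private lemma cv8 (a b c d e f g h i j k l : ℝ) : ![a,b,c,d,e,f,g,h,i,j,k,l] 8 = i := rfl
private lemma cv9 (a b c d e f g h i j k l : ℝ) : ![a,b,c,d,e,f,g,h,i,j,k,l] 9 = j := rfl
private lemma cv10 (a b c d e f g h i j k l : ℝ) : ![a,b,c,d,e,f,g,h,i,j,k,l] 10 = k := rfl
private lemma cv11 (a b c d e f g h i j k l : ℝ) : ![a,b,c,d,e,f,g,h,i,j,k,l] 11 = l := rfl

theorem combo_in_nat_iff (q1 q2 q3 q4 q5 q6 : ℝ) :
    (∀ i, IsNatNum ((q1 • a1 + q2 • a2 + q3 • a3 + q4 • a4 + q5 • a5 + q6 • a6) i)) ↔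
      (IsNatNum q1 ∧ IsNatNum q2 ∧ IsNatNum q3 ∧ IsNatNum q6) ∧
      (IsNatNum (q1+q4) ∧ IsNatNum (q2+q4) ∧ IsNatNum (q3+q4) ∧ IsNatNum (q6+q4)) ∧
      (IsNatNum (q1+q3+q5) ∧ IsNatNum (q1+q5+q6) ∧
        IsNatNum (q2+q3+q5) ∧ IsNatNum (q2+q5+q6)) := by
  constructor
  · intro h
    have h0 := h 0; have h1 := h 1; have h2 := h 2; have h3 := h 3
    have h4 := h 4; have h5 := h 5; have h6 := h 6; have h7 := h 7
    have h8 := h 8; have h9 := h 9; have h10 := h 10; have h11 := h 11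
    simp [a1, a2, a3, a4, a5, a6, Matrix.cons_val_succ, cv5, cv6, cv7, cv8, cv9, cv10, cv11] at h0 h1 h2 h3 h4 h5 h6 h7 h8 h9 h10 h11
    refine ⟨⟨h2, h6, h11, h8⟩, ⟨h1, h5, h10, by rwa [add_comm] at h9⟩,
      ⟨h4, h7, h0, h3⟩⟩
  · rintro ⟨⟨c1, c2, c3, c6⟩, ⟨c14, c24, c34, c64⟩, ⟨c135, c156, c235, c256⟩⟩ i
    fin_cases i <;> simp [a1, a2, a3, a4, a5, a6, Matrix.cons_val_succ, cv5, cv6, cv7, cv8, cv9, cv10, cv11] <;>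
      first
        | exact c1 | exact c2 | exact c3 | exact c6
        | exact c14 | exact c24 | exact c34 | exact (by rwa [add_comm] at c64)
        | exact c135 | exact c156 | exact c235 | exact c256
end
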